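/- arXiv:2401.02289 — 2 statements merged into one kernel-verified Lean document; each statement's English description precedes it below -/
import Mathlib

section
/- Let α and β be finite nonempty types with decidable equality and let G be a simple graph on α × β with at least one edge such that for all i, k : α and j, l : β, if G.Adj (i,j) (k,l) then G.Adj (i,l) (k,j) (every neighbourhood relation v_{ij} ∈ N(v_{kl}) is accompanied by v_{il} ∈ N(v_{kj})). Then the graph Laplacian state ρ_G is separable (as a state on ℂ^α ⊗ ℂ^β). -/
open Matrix Kronecker ComplexOrder

noncomputable section

/-- A density matrix: positive semidefinite with trace 1. -/
def IsDensityMatrix {n : Type*} [Fintype n] (ρ : Matrix n n ℂ) : Prop :=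
  ρ.PosSemidef ∧ ρ.trace = 1

/-- Separability of a bipartite density matrix: a convex combination of Kronecker
products of density matrices of the subsystems. -/
def Separable {α β : Type*} [Fintype α] [Fintype β]
    (ρ : Matrix (α × β) (α × β) ℂ) : Prop :=
  ∃ (n : ℕ) (p : Fin n → ℝ) (σ : Fin n → Matrix α α ℂ) (τ : Fin n → Matrix β β ℂ),
    (∀ k, 0 ≤ p k) ∧ (∑ k, p k = 1) ∧
    (∀ k, (σ k).PosSemidef ∧ (σ k).trace = 1) ∧
    (∀ k, (τ k).PosSemidef ∧ (τ k).trace = 1) ∧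
    ρ = ∑ k, (p k : ℂ) • (σ k ⊗ₖ τ k)

/-- The `(x,y)`-block of a bipartite matrix. -/
def matBlock {α β : Type*} (ρ : Matrix (α × β) (α × β) ℂ) (x y : α) :
    Matrix β β ℂ :=
  Matrix.of fun j l => ρ (x, j) (y, l)

/-- The graph Laplacian quantum state of a simple graph. -/
def lapState {V : Type*} [Fintype V] [DecidableEq V] (G : SimpleGraph V)
    [DecidableRel G.Adj] : Matrix V V ℂ :=
  ((2 * G.edgeFinset.card : ℂ))⁻¹ • G.lapMatrix ℂ

namespace NSep

/-- Outer product of a vector with itself. -/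
def outer {n : Type*} (u : n → ℂ) : Matrix n n ℂ := vecMulVec u (star u)

lemma outer_apply {n : Type*} (u : n → ℂ) (i j : n) : outer u i j = u i * star (u j) := rfl

lemma outer_posSemidef {n : Type*} [Fintype n] (u : n → ℂ) : (outer u).PosSemidef := by
  rw [posSemidef_iff_dotProduct_mulVec]
  constructor
  · ext i j
    simp [outer, conjTranspose_apply, vecMulVec_apply, mul_comm]
  · intro x
    have h1 : ∀ i, (outer u *ᵥ x) i = u i * (star u ⬝ᵥ x) := by
      intro i
      simp [outer, mulVec, dotProduct, vecMulVec_apply, Finset.mul_sum, mul_assoc]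
    have : star x ⬝ᵥ (outer u *ᵥ x) = star (star u ⬝ᵥ x) * (star u ⬝ᵥ x) := by
      simp only [dotProduct, h1]
      rw [Finset.sum_congr rfl (fun i _ => (mul_assoc _ _ _).symm), ← Finset.sum_mul]
      congr 1
      simp [star_sum, dotProduct, Finset.mul_sum, mul_comm]
    rw [this]
    exact star_mul_self_nonneg _

lemma smul_posSemidef {n : Type*} [Fintype n] {M : Matrix n n ℂ} (hM : M.PosSemidef)
    {r : ℝ} (hr : 0 ≤ r) : ((r : ℂ) • M).PosSemidef := by
  rw [posSemidef_iff_dotProduct_mulVec]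
  constructor
  · ext i j
    simp [conjTranspose_apply, hM.1.apply]
  · intro x
    rw [smul_mulVec, dotProduct_smul, smul_eq_mul]
    exact mul_nonneg (by exact_mod_cast hr) (hM.dotProduct_mulVec_nonneg x)

/-- The squared norm of a vector. -/
def nsum {n : Type*} [Fintype n] (u : n → ℂ) : ℝ := ∑ i, Complex.normSq (u i)

lemma nsum_nonneg {n : Type*} [Fintype n] (u : n → ℂ) : 0 ≤ nsum u :=
  Finset.sum_nonneg fun i _ => Complex.normSq_nonneg _

lemma outer_trace {n : Type*} [Fintype n] (u : n → ℂ) :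
    (outer u).trace = ((nsum u : ℝ) : ℂ) := by
  simp [outer, nsum, trace, diag, vecMulVec_apply, Complex.mul_conj]

lemma outer_eq_zero {n : Type*} [Fintype n] (u : n → ℂ)
    (h : nsum u = 0) : outer u = 0 := by
  have hu : ∀ i, u i = 0 := by
    intro i
    have := (Finset.sum_eq_zero_iff_of_nonneg
      (fun i _ => Complex.normSq_nonneg (u i))).mp h i (Finset.mem_univ i)
    exact Complex.normSq_eq_zero.mp this
  ext i j
  simp [outer_apply, hu]

/-- The uniform density matrix, used as a dummy. -/
def unif (α : Type*) [Fintype α] [DecidableEq α] : Matrix α α ℂ :=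
  (Complex.ofReal ((Fintype.card α : ℝ)⁻¹)) • 1

variable {α β : Type*} [Fintype α] [Fintype β] [Nonempty α] [Nonempty β]
  [DecidableEq α] [DecidableEq β]

lemma unif_posSemidef : (unif α).PosSemidef := by
  unfold unif
  exact smul_posSemidef Matrix.PosSemidef.one (by positivity)

lemma unif_trace : (unif α).trace = 1 := by
  have h : (Fintype.card α : ℝ) ≠ 0 := by
    exact_mod_cast Fintype.card_ne_zero
  rw [unif, trace_smul, trace_one, smul_eq_mul, ← Complex.ofReal_natCast,
    ← Complex.ofReal_mul, inv_mul_cancel₀ h, Complex.ofReal_one]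

/-- Normalization of an outer product to a density matrix. -/
def nrm {n : Type*} [Fintype n] [DecidableEq n] [Nonempty n] (u : n → ℂ) : Matrix n n ℂ :=
  if nsum u = 0 then unif n else (((nsum u)⁻¹ : ℝ) : ℂ) • outer u

lemma nrm_density {n : Type*} [Fintype n] [DecidableEq n] [Nonempty n] (u : n → ℂ) :
    (nrm u).PosSemidef ∧ (nrm u).trace = 1 := by
  unfold nrm
  split_ifs with h
  · exact ⟨unif_posSemidef, unif_trace⟩
  · refine ⟨smul_posSemidef (outer_posSemidef u) (inv_nonneg.2 (nsum_nonneg u)), ?_⟩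
    rw [trace_smul, outer_trace, smul_eq_mul, ← Complex.ofReal_mul,
      inv_mul_cancel₀ h, Complex.ofReal_one]

lemma smul_nrm {n : Type*} [Fintype n] [DecidableEq n] [Nonempty n] (u : n → ℂ) :
    ((nsum u : ℝ) : ℂ) • nrm u = outer u := by
  unfold nrm
  split_ifs with h
  · rw [h, outer_eq_zero u h]; simp
  · rw [smul_smul, ← Complex.ofReal_mul, mul_inv_cancel₀ h, Complex.ofReal_one, one_smul]

/-- A matrix which is a combination, with nonnegative coefficients, of Kronecker
products of outer products, and which has trace one, is separable. -/
lemma separable_of_outer_sum {S : Type*} [Fintype S]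
    (c : S → ℝ) (hc : ∀ s, 0 ≤ c s)
    (u : S → α → ℂ) (v : S → β → ℂ)
    (ρ : Matrix (α × β) (α × β) ℂ)
    (hρ : ρ = ∑ s, (c s : ℂ) • (outer (u s) ⊗ₖ outer (v s)))
    (htr : ρ.trace = 1) : Separable ρ := by
  obtain ⟨e⟩ : Nonempty (Fin (Fintype.card S) ≃ S) := ⟨(Fintype.equivFin S).symm⟩
  refine ⟨Fintype.card S, fun k => c (e k) * nsum (u (e k)) * nsum (v (e k)),
    fun k => nrm (u (e k)), fun k => nrm (v (e k)), ?_, ?_, fun k => nrm_density _,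
    fun k => nrm_density _, ?_⟩
  · intro k
    exact mul_nonneg (mul_nonneg (hc _) (nsum_nonneg _)) (nsum_nonneg _)
  · -- sum of weights is 1
    have key : ∀ s, ((c s * nsum (u s) * nsum (v s) : ℝ) : ℂ)
        = ((c s : ℂ) • (outer (u s) ⊗ₖ outer (v s))).trace := by
      intro s
      rw [trace_smul, trace_kronecker, outer_trace, outer_trace, smul_eq_mul]
      push_cast
      ring
    have h2 : (∑ k, ((c (e k) * nsum (u (e k)) * nsum (v (e k)) : ℝ) : ℂ)) = 1 := by
      rw [Finset.sum_congr rfl fun k _ => key (e k),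
        Fintype.sum_equiv e _ (fun s => ((c s : ℂ) • (outer (u s) ⊗ₖ outer (v s))).trace)
          (fun k => rfl), ← trace_sum, ← hρ, htr]
    exact_mod_cast h2
  · -- the decomposition
    rw [hρ]
    refine (Fintype.sum_equiv e _ _ ?_).symm
    intro k
    dsimp only
    rw [← smul_nrm (u (e k)), ← smul_nrm (v (e k)), smul_kronecker, kronecker_smul,
      smul_smul, smul_smul]
    congr 1
    push_cast
    ring

/-- The standard basis vector. -/
def ev {n : Type*} [DecidableEq n] (i : n) : n → ℂ := fun x => if x = i then 1 else 0

lemma key_identity (i k : α) (j l : β) :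
    outer (ev (i,j) - ev (k,l)) + outer (ev (i,l) - ev (k,j))
      = (2:ℂ)⁻¹ • ((outer (ev i - ev k) ⊗ₖ outer (ev j + ev l))
          + (outer (ev i + ev k) ⊗ₖ outer (ev j - ev l))) := by
  ext ⟨a,b⟩ ⟨c,d⟩
  simp only [outer, Matrix.add_apply, Matrix.smul_apply, kroneckerMap_apply,
    vecMulVec_apply, Pi.sub_apply, Pi.add_apply, ev, Pi.star_apply, star_sub, star_add,
    Prod.mk.injEq, smul_eq_mul]
  simp only [apply_ite (star : ℂ → ℂ), star_one, star_zero, ite_and]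
  split_ifs <;> ring

variable {V : Type*} [Fintype V] [DecidableEq V]

lemma hpick (a : V) (f : V → ℂ) : (∑ v, (if a = v then (1:ℂ) else 0) * f v) = f a := by
  simp [ite_mul]

/-- Decomposition of the graph Laplacian as a sum of edge Laplacians (over ordered pairs). -/
lemma lap_decomp (G : SimpleGraph V) [DecidableRel G.Adj] :
    G.lapMatrix ℂ
      = (2:ℂ)⁻¹ • ∑ p : V × V, (if G.Adj p.1 p.2 then (1:ℂ) else 0) • outer (ev p.1 - ev p.2) := by
  ext a b
  rw [Fintype.sum_prod_type]
  simp only [Matrix.smul_apply, Matrix.sum_apply, outer, vecMulVec_apply, Pi.sub_apply,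
    Pi.star_apply, star_sub, ev, apply_ite (star : ℂ → ℂ), star_one, star_zero, smul_eq_mul]
  have expand : ∀ v w : V, (if G.Adj v w then (1:ℂ) else 0) *
      (((if a = v then (1:ℂ) else 0) - if a = w then 1 else 0) *
        ((if b = v then (1:ℂ) else 0) - if b = w then 1 else 0))
      = ((if G.Adj v w then (1:ℂ) else 0) * ((if a = v then (1:ℂ) else 0) * (if b = v then (1:ℂ) else 0))
        - (if G.Adj v w then (1:ℂ) else 0) * ((if a = v then (1:ℂ) else 0) * (if b = w then (1:ℂ) else 0)))
        - ((if G.Adj v w then (1:ℂ) else 0) * ((if a = w then (1:ℂ) else 0) * (if b = v then (1:ℂ) else 0))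
        - (if G.Adj v w then (1:ℂ) else 0) * ((if a = w then (1:ℂ) else 0) * (if b = w then (1:ℂ) else 0))) := by
    intro v w; ring
  simp only [expand, Finset.sum_sub_distrib]
  have hD : ∀ x : V, (∑ w, (if G.Adj x w then (1:ℂ) else 0)) = (G.degree x : ℂ) := by
    intro x
    rw [Finset.sum_boole, SimpleGraph.degree, SimpleGraph.neighborFinset_eq_filter]
  have T1 : ∑ v, ∑ w, (if G.Adj v w then (1:ℂ) else 0) *
      ((if a = v then (1:ℂ) else 0) * (if b = v then (1:ℂ) else 0))
      = (if a = b then (G.degree a : ℂ) else 0) := by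
    have h1 : ∀ v, ∑ w, (if G.Adj v w then (1:ℂ) else 0) *
        ((if a = v then (1:ℂ) else 0) * (if b = v then (1:ℂ) else 0))
        = (if a = v then (1:ℂ) else 0) * ((if b = v then (1:ℂ) else 0) * (G.degree v : ℂ)) := by
      intro v
      rw [← hD v, Finset.mul_sum, Finset.mul_sum]
      exact Finset.sum_congr rfl fun w _ => by ring
    rw [Finset.sum_congr rfl fun v _ => h1 v, hpick]
    by_cases h : a = b <;> simp [h, eq_comm]
  have T2 : ∑ v, ∑ w, (if G.Adj v w then (1:ℂ) else 0) *
      ((if a = v then (1:ℂ) else 0) * (if b = w then (1:ℂ) else 0))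
      = (if G.Adj a b then (1:ℂ) else 0) := by
    have h1 : ∀ v, ∑ w, (if G.Adj v w then (1:ℂ) else 0) *
        ((if a = v then (1:ℂ) else 0) * (if b = w then (1:ℂ) else 0))
        = (if a = v then (1:ℂ) else 0) * (if G.Adj v b then (1:ℂ) else 0) := by
      intro v
      rw [show (if a = v then (1:ℂ) else 0) * (if G.Adj v b then (1:ℂ) else 0)
          = ∑ w, (if b = w then (1:ℂ) else 0) *
            ((if G.Adj v w then (1:ℂ) else 0) * (if a = v then (1:ℂ) else 0)) by
        rw [hpick]; ring]
      exact Finset.sum_congr rfl fun w _ => by ring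
    rw [Finset.sum_congr rfl fun v _ => h1 v, hpick]
  have T3 : ∑ v, ∑ w, (if G.Adj v w then (1:ℂ) else 0) *
      ((if a = w then (1:ℂ) else 0) * (if b = v then (1:ℂ) else 0))
      = (if G.Adj a b then (1:ℂ) else 0) := by
    have h1 : ∀ v, ∑ w, (if G.Adj v w then (1:ℂ) else 0) *
        ((if a = w then (1:ℂ) else 0) * (if b = v then (1:ℂ) else 0))
        = (if b = v then (1:ℂ) else 0) * (if G.Adj v a then (1:ℂ) else 0) := by
      intro v
      rw [show (if b = v then (1:ℂ) else 0) * (if G.Adj v a then (1:ℂ) else 0)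
          = ∑ w, (if a = w then (1:ℂ) else 0) *
            ((if G.Adj v w then (1:ℂ) else 0) * (if b = v then (1:ℂ) else 0)) by
        rw [hpick]; ring]
      exact Finset.sum_congr rfl fun w _ => by ring
    rw [Finset.sum_congr rfl fun v _ => h1 v, hpick]
    simp [SimpleGraph.adj_comm]
  have T4 : ∑ v, ∑ w, (if G.Adj v w then (1:ℂ) else 0) *
      ((if a = w then (1:ℂ) else 0) * (if b = w then (1:ℂ) else 0))
      = (if a = b then (G.degree a : ℂ) else 0) := by
    rw [Finset.sum_comm]
    have h1 : ∀ w, ∑ v, (if G.Adj v w then (1:ℂ) else 0) *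
        ((if a = w then (1:ℂ) else 0) * (if b = w then (1:ℂ) else 0))
        = (if a = w then (1:ℂ) else 0) * ((if b = w then (1:ℂ) else 0) * (G.degree w : ℂ)) := by
      intro w
      have hDw : (∑ v, (if G.Adj v w then (1:ℂ) else 0)) = (G.degree w : ℂ) := by
        rw [← hD w]
        exact Finset.sum_congr rfl fun v _ => if_congr (G.adj_comm v w) rfl rfl
      rw [← hDw, Finset.mul_sum, Finset.mul_sum]
      exact Finset.sum_congr rfl fun v _ => by ring
    rw [Finset.sum_congr rfl fun w _ => h1 w, hpick]
    by_cases h : a = b <;> simp [h, eq_comm]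
  rw [T1, T2, T3, T4]
  simp only [SimpleGraph.lapMatrix, Matrix.sub_apply, SimpleGraph.degMatrix,
    Matrix.diagonal_apply, SimpleGraph.adjMatrix_apply]
  by_cases h : a = b <;> by_cases h2 : G.Adj a b <;> simp [h, h2] <;> ring

lemma trace_lapMatrix (G : SimpleGraph V) [DecidableRel G.Adj] :
    (G.lapMatrix ℂ).trace = (2 * G.edgeFinset.card : ℂ) := by
  rw [SimpleGraph.lapMatrix, trace_sub, SimpleGraph.trace_adjMatrix, sub_zero,
    SimpleGraph.degMatrix, trace_diagonal]
  rw [show (∑ i : V, (G.degree i : ℂ)) = ((∑ i, G.degree i : ℕ) : ℂ) by push_cast; rfl]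
  rw [SimpleGraph.sum_degrees_eq_twice_card_edges]
  push_cast
  ring

end NSep

theorem neighbourhood_swap_closed_separable
    {α β : Type*} [Fintype α] [Fintype β] [Nonempty α] [Nonempty β]
    [DecidableEq α] [DecidableEq β]
    (G : SimpleGraph (α × β)) [DecidableRel G.Adj]
    (hE : G.edgeFinset.Nonempty)
    (hAdj : ∀ (i k : α) (j l : β), G.Adj (i, j) (k, l) → G.Adj (i, l) (k, j)) :
    Separable (lapState G) := by
  classical
  set E := G.edgeFinset.card with hEdef
  have hE0 : (E : ℝ) ≠ 0 := by
    exact_mod_cast (Finset.card_pos.2 hE).ne'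
  have hE0' : (2 * E : ℂ) ≠ 0 := by
    refine mul_ne_zero two_ne_zero ?_
    exact_mod_cast (Finset.card_pos.2 hE).ne'
  set A : (α × β) × (α × β) → ℂ := fun p => if G.Adj p.1 p.2 then (1:ℂ) else 0 with hAdef
  set T : Matrix (α × β) (α × β) ℂ :=
    ∑ p : (α × β) × (α × β), A p • NSep.outer (NSep.ev p.1 - NSep.ev p.2) with hTdef
  have hL : G.lapMatrix ℂ = (2:ℂ)⁻¹ • T := NSep.lap_decomp G
  -- the coordinate swap
  set sw : (α × β) × (α × β) → (α × β) × (α × β) :=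
    fun p => ((p.1.1, p.2.2), (p.2.1, p.1.2)) with hswdef
  have hswinv : Function.Involutive sw := fun p => rfl
  have hAsw : ∀ p, A (sw p) = A p := by
    rintro ⟨⟨i,j⟩,⟨k,l⟩⟩
    exact if_congr ⟨hAdj i k l j, hAdj i k j l⟩ rfl rfl
  have hswT : T = ∑ p, A p • NSep.outer (NSep.ev (sw p).1 - NSep.ev (sw p).2) := by
    calc T = ∑ p, A (sw p) • NSep.outer (NSep.ev (sw p).1 - NSep.ev (sw p).2) :=
      (Fintype.sum_bijective sw hswinv.bijective _ _ (fun p => rfl)).symm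
    _ = _ := Finset.sum_congr rfl fun p _ => by rw [hAsw]
  have hTT : T + T = ∑ p : (α × β) × (α × β), A p • ((2:ℂ)⁻¹ •
      ((NSep.outer (NSep.ev p.1.1 - NSep.ev p.2.1) ⊗ₖ NSep.outer (NSep.ev p.1.2 + NSep.ev p.2.2))
        + (NSep.outer (NSep.ev p.1.1 + NSep.ev p.2.1) ⊗ₖ NSep.outer (NSep.ev p.1.2 - NSep.ev p.2.2)))) := by
    nth_rewrite 2 [hswT]
    rw [hTdef, ← Finset.sum_add_distrib]
    refine Finset.sum_congr rfl ?_
    rintro ⟨⟨i,j⟩,⟨k,l⟩⟩ _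
    rw [← smul_add]
    congr 1
    exact NSep.key_identity i k j l
  -- the separable decomposition
  have hρ : lapState G = ∑ s : Bool × ((α × β) × (α × β)),
      (((if G.Adj s.2.1 s.2.2 then (16 * E : ℝ)⁻¹ else 0 : ℝ)) : ℂ) •
        (NSep.outer (if s.1 then NSep.ev s.2.1.1 - NSep.ev s.2.2.1
            else NSep.ev s.2.1.1 + NSep.ev s.2.2.1) ⊗ₖ
          NSep.outer (if s.1 then NSep.ev s.2.1.2 + NSep.ev s.2.2.2
            else NSep.ev s.2.1.2 - NSep.ev s.2.2.2)) := by
    rw [Fintype.sum_prod_type, Fintype.sum_bool]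
    simp only [reduceIte]
    rw [← Finset.sum_add_distrib]
    have hT2 : T = (2:ℂ)⁻¹ • (T + T) := by
      rw [smul_add]
      rw [← add_smul]
      norm_num
    rw [lapState, hL, hT2, hTT]
    rw [Finset.smul_sum, Finset.smul_sum, Finset.smul_sum]
    refine Finset.sum_congr rfl ?_
    rintro ⟨⟨i,j⟩,⟨k,l⟩⟩ _
    simp only [hAdef]
    by_cases h : G.Adj (i, j) (k, l)
    · have hE0c : (E : ℂ) ≠ 0 := by exact_mod_cast hE0
      simp only [h, if_true, one_smul, smul_add, smul_smul]
      rw [← hEdef]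
      congr 1 <;> congr 1 <;> · push_cast; field_simp; ring
    · simp [h]
  -- trace is 1
  have htr : (lapState G).trace = 1 := by
    rw [lapState, trace_smul, NSep.trace_lapMatrix, smul_eq_mul, ← hEdef,
      inv_mul_cancel₀ hE0']
  refine NSep.separable_of_outer_sum _ ?_ _ _ _ hρ htr
  rintro ⟨b, p⟩
  dsimp only
  split_ifs
  · positivity
  · exact le_refl 0
end
end

section
/- Let W be a finite type with decidable equality and let G be a simple graph on W × Fin 2 with at least one edge such that for all w, w' : W and all a, b : Fin 2 with a ≠ b, if G.Adj (w,a) (w',b) then G.Adj (w, 1−a) (w', 1−b) (every edge between vertices whose parity labels differ is accompanied by the edge with both parity labels flipped). Then the graph Laplacian state ρ_G is separable (as a state on ℂ^W ⊗ ℂ²). -/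
open Matrix Kronecker ComplexOrder

noncomputable section

/-! ### Auxiliary machinery for the separability proof -/

set_option linter.unusedSectionVars false
set_option maxHeartbeats 1000000

namespace PF

variable {α β : Type*} [Fintype α] [DecidableEq α] [Fintype β] [DecidableEq β]

/-- indicator vector -/
def ind (w : α) : α → ℂ := fun x => if x = w then 1 else 0

/-- rank-one outer product matrix -/
def outer (v : α → ℂ) : Matrix α α ℂ := Matrix.of fun x y => v x * star (v y)

lemma outer_posSemidef (v : α → ℂ) : (outer v).PosSemidef := by
  have : outer v = (Matrix.of fun (_ : Fin 1) j => star (v j))ᴴ *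
      (Matrix.of fun (_ : Fin 1) j => star (v j)) := by
    ext x y
    simp [outer, Matrix.mul_apply, Matrix.conjTranspose_apply]
  rw [this]
  exact Matrix.posSemidef_conjTranspose_mul_self _

lemma outer_neg (v : α → ℂ) : outer (-v) = outer v := by
  ext x y; simp [outer]

lemma outer_polar (f g : α → ℂ) :
    outer (f + g) + outer (f - g) = (2:ℂ) • (outer f + outer g) := by
  ext x y
  simp [outer, Matrix.smul_apply, smul_eq_mul]
  ring

lemma smul_posSemidef {M : Matrix α α ℂ} (h : M.PosSemidef) {c : ℝ} (hc : 0 ≤ c) :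
    ((c:ℂ) • M).PosSemidef := by
  rw [Matrix.posSemidef_iff_dotProduct_mulVec]
  constructor
  · have : ((c:ℂ) • M)ᴴ = star (c:ℂ) • Mᴴ := Matrix.conjTranspose_smul _ _
    rw [Matrix.IsHermitian, this, h.1.eq]
    congr 1
    simp
  · intro x
    rw [Matrix.smul_mulVec, dotProduct_smul, smul_eq_mul]
    exact mul_nonneg (by exact_mod_cast Complex.zero_le_real.mpr hc) (h.dotProduct_mulVec_nonneg x)

lemma half_posSemidef {M : Matrix α α ℂ} (h : M.PosSemidef) :
    ((2:ℂ)⁻¹ • M).PosSemidef := by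
  have hc : (2:ℂ)⁻¹ = ((2⁻¹:ℝ):ℂ) := by norm_num
  rw [hc]
  exact smul_posSemidef h (by norm_num)

lemma trace_outer (v : α → ℂ) : (outer v).trace = ∑ x, v x * star (v x) := by
  simp [Matrix.trace, Matrix.diag, outer]

lemma trace_outer_ind (w : α) : (outer (ind w)).trace = 1 := by
  rw [trace_outer]
  have key : ∀ x, ind w x * star (ind w x) = if x = w then (1:ℂ) else 0 := by
    intro x; by_cases h : x = w <;> simp [ind, h]
  rw [Finset.sum_congr rfl fun x _ => key x]
  simp

lemma trace_outer_sub {w w' : α} (h : w ≠ w') : (outer (ind w - ind w')).trace = 2 := by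
  rw [trace_outer]
  have key : ∀ x, (ind w - ind w') x * star ((ind w - ind w') x)
      = (if x = w then (1:ℂ) else 0) + (if x = w' then (1:ℂ) else 0) := by
    intro x
    by_cases h1 : x = w <;> by_cases h2 : x = w' <;>
      simp [ind, h1, h2] <;> subst_vars <;> simp_all
  rw [Finset.sum_congr rfl fun x _ => key x, Finset.sum_add_distrib]
  simp
  norm_num

lemma trace_outer_add {w w' : α} (h : w ≠ w') : (outer (ind w + ind w')).trace = 2 := by
  rw [trace_outer]
  have key : ∀ x, (ind w + ind w') x * star ((ind w + ind w') x)
      = (if x = w then (1:ℂ) else 0) + (if x = w' then (1:ℂ) else 0) := by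
    intro x
    by_cases h1 : x = w <;> by_cases h2 : x = w' <;>
      simp [ind, h1, h2] <;> subst_vars <;> simp_all
  rw [Finset.sum_congr rfl fun x _ => key x, Finset.sum_add_distrib]
  simp
  norm_num

lemma ind_prod (w : α) (a : β) (p : α × β) : ind w p.1 * ind a p.2 = ind (w, a) p := by
  by_cases h1 : p.1 = w <;> by_cases h2 : p.2 = a <;>
    simp [ind, Prod.ext_iff, h1, h2]

lemma outer_kron (v : α → ℂ) (u : β → ℂ) :
    (outer v) ⊗ₖ (outer u) = outer (fun p => v p.1 * u p.2) := by
  ext ⟨x,i⟩ ⟨y,j⟩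
  simp [outer, Matrix.kroneckerMap_apply]
  ring

lemma vecA (w w' : α) (a : β) :
    (fun p : α × β => (ind w - ind w') p.1 * ind a p.2) = ind (w,a) - ind (w',a) := by
  funext p
  simp only [Pi.sub_apply, sub_mul, ind_prod]

lemma vecB (w : α) (a b : β) :
    (fun p : α × β => ind w p.1 * (ind a - ind b) p.2) = ind (w,a) - ind (w,b) := by
  funext p
  simp only [Pi.sub_apply, mul_sub, ind_prod]

lemma vecC (w w' : α) (a b : β) :
    (fun p : α × β => (ind w + ind w') p.1 * (ind a - ind b) p.2)
      = (ind (w,a) - ind (w',b)) + (ind (w',a) - ind (w,b)) := by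
  funext p
  simp only [Pi.sub_apply, Pi.add_apply, add_mul, mul_sub, ind_prod]
  ring

lemma vecD (w w' : α) (a b : β) :
    (fun p : α × β => (ind w - ind w') p.1 * (ind a + ind b) p.2)
      = (ind (w,a) - ind (w',b)) - (ind (w',a) - ind (w,b)) := by
  funext p
  simp only [Pi.sub_apply, Pi.add_apply, sub_mul, mul_add, ind_prod]
  ring

/-! ### Sums over ordered pairs: the Laplacian decomposition -/

lemma sumA {V : Type*} [Fintype V] [DecidableEq V] (G : SimpleGraph V) [DecidableRel G.Adj]
    (x y : V) :
    ∑ q : V × V, (if G.Adj q.1 q.2 ∧ x = q.1 ∧ y = q.1 then (1:ℂ) else 0)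
      = if x = y then (G.degree x : ℂ) else 0 := by
  rw [Fintype.sum_prod_type]
  by_cases hxy : x = y
  · subst hxy
    have inner : ∀ u, (∑ v, if G.Adj u v ∧ x = u ∧ x = u then (1:ℂ) else 0)
        = if x = u then (G.degree u : ℂ) else 0 := by
      intro u
      by_cases hu : x = u
      · subst hu
        simp only [and_self, and_true]
        rw [Finset.sum_boole]
        congr 1
        simp [SimpleGraph.degree, SimpleGraph.neighborFinset_eq_filter]
      · rw [if_neg hu]
        refine Finset.sum_eq_zero fun v _ => ?_
        rw [if_neg]
        tauto
    rw [Finset.sum_congr rfl fun u _ => inner u, if_pos rfl]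
    rw [Finset.sum_ite_eq]
    simp
  · rw [if_neg hxy]
    refine Finset.sum_eq_zero fun u _ => Finset.sum_eq_zero fun v _ => ?_
    rw [if_neg]
    rintro ⟨-, h1, h2⟩
    exact hxy (h1.trans h2.symm)

lemma sumB {V : Type*} [Fintype V] [DecidableEq V] (G : SimpleGraph V) [DecidableRel G.Adj]
    (x y : V) :
    ∑ q : V × V, (if G.Adj q.1 q.2 ∧ x = q.1 ∧ y = q.2 then (1:ℂ) else 0)
      = if G.Adj x y then 1 else 0 := by
  have cond : ∀ q : V × V, (G.Adj q.1 q.2 ∧ x = q.1 ∧ y = q.2) ↔ (G.Adj x y ∧ q = (x, y)) := by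
    rintro ⟨u, v⟩
    constructor
    · rintro ⟨h, rfl, rfl⟩; exact ⟨h, rfl⟩
    · rintro ⟨h, heq⟩
      injection heq with h1 h2
      subst h1; subst h2
      exact ⟨h, rfl, rfl⟩
  rw [Finset.sum_congr rfl fun q _ => if_congr (cond q) rfl rfl]
  by_cases h : G.Adj x y
  · simp [h]
  · simp [h]

lemma lap_eq_sum {V : Type*} [Fintype V] [DecidableEq V] (G : SimpleGraph V)
    [DecidableRel G.Adj] :
    G.lapMatrix ℂ
      = ∑ q : V × V, (if G.Adj q.1 q.2 then (2:ℂ)⁻¹ • outer (ind q.1 - ind q.2) else 0) := by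
  ext x y
  rw [Matrix.sum_apply]
  have key : ∀ q : V × V,
      (if G.Adj q.1 q.2 then (2:ℂ)⁻¹ • outer (ind q.1 - ind q.2) else (0 : Matrix V V ℂ)) x y
      = (2:ℂ)⁻¹ * ((if G.Adj q.1 q.2 ∧ x = q.1 ∧ y = q.1 then 1 else 0)
        - (if G.Adj q.1 q.2 ∧ x = q.1 ∧ y = q.2 then 1 else 0)
        - (if G.Adj q.1 q.2 ∧ x = q.2 ∧ y = q.1 then 1 else 0)
        + (if G.Adj q.1 q.2 ∧ x = q.2 ∧ y = q.2 then 1 else 0)) := by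
    intro q
    by_cases h : G.Adj q.1 q.2
    · have hne : ¬ q.1 = q.2 := G.ne_of_adj h
      by_cases h1 : x = q.1 <;> by_cases h2 : x = q.2 <;>
        by_cases h3 : y = q.1 <;> by_cases h4 : y = q.2 <;>
        (simp_all [outer, ind, Matrix.smul_apply, smul_eq_mul]; try ring)
    · simp [h]
  rw [Finset.sum_congr rfl fun q _ => key q, ← Finset.mul_sum]
  rw [Finset.sum_add_distrib, Finset.sum_sub_distrib, Finset.sum_sub_distrib]
  rw [sumA, sumB]
  have s3 : ∑ q : V × V, (if G.Adj q.1 q.2 ∧ x = q.2 ∧ y = q.1 then (1:ℂ) else 0)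
      = if G.Adj x y then 1 else 0 := by
    rw [← Equiv.sum_comp (Equiv.prodComm V V) fun q : V × V =>
      (if G.Adj q.1 q.2 ∧ x = q.2 ∧ y = q.1 then (1:ℂ) else 0)]
    have cond : ∀ q : V × V, (G.Adj q.2 q.1 ∧ x = q.1 ∧ y = q.2) ↔ (G.Adj y x ∧ q = (x, y)) := by
      rintro ⟨u, v⟩
      constructor
      · rintro ⟨h, rfl, rfl⟩; exact ⟨h, rfl⟩
      · rintro ⟨h, heq⟩
        injection heq with h1 h2
        subst h1; subst h2
        exact ⟨h, rfl, rfl⟩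
    simp only [Equiv.prodComm_apply, Prod.fst_swap, Prod.snd_swap]
    refine (Finset.sum_congr rfl fun (q : V × V) _ => if_congr (cond q) rfl rfl).trans ?_
    by_cases h : G.Adj x y
    · have h2 : G.Adj y x := h.symm
      simp [h, h2]
    · have h2 : ¬ G.Adj y x := fun hc => h hc.symm
      simp [h, h2]
  have s4 : ∑ q : V × V, (if G.Adj q.1 q.2 ∧ x = q.2 ∧ y = q.2 then (1:ℂ) else 0)
      = if x = y then (G.degree x : ℂ) else 0 := by
    rw [← Equiv.sum_comp (Equiv.prodComm V V) fun q : V × V =>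
      (if G.Adj q.1 q.2 ∧ x = q.2 ∧ y = q.2 then (1:ℂ) else 0)]
    simp only [Equiv.prodComm_apply, Prod.fst_swap, Prod.snd_swap]
    refine (Finset.sum_congr rfl fun (q : V × V) _ => if_congr (and_congr_left' (G.adj_comm q.2 q.1)) rfl rfl).trans ?_
    exact sumA G x y
  rw [s3, s4]
  simp only [SimpleGraph.lapMatrix, SimpleGraph.degMatrix, Matrix.sub_apply,
    Matrix.diagonal_apply, SimpleGraph.adjMatrix_apply]
  split_ifs <;> ring

/-! ### The separating family -/

variable {W : Type*} [Fintype W] [DecidableEq W]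

def sig (G : SimpleGraph (W × Fin 2)) [DecidableRel G.Adj] (w₀ : W)
    (q : (W × Fin 2) × (W × Fin 2)) : Matrix W W ℂ :=
  if G.Adj q.1 q.2 then
    if q.1.2 = q.2.2 then (2:ℂ)⁻¹ • outer (ind q.1.1 - ind q.2.1)
    else if q.1.1 = q.2.1 then outer (ind q.1.1)
    else if q.1.2 = 0 then (2:ℂ)⁻¹ • outer (ind q.1.1 + ind q.2.1)
    else (2:ℂ)⁻¹ • outer (ind q.1.1 - ind q.2.1)
  else outer (ind w₀)

def tau (G : SimpleGraph (W × Fin 2)) [DecidableRel G.Adj]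
    (q : (W × Fin 2) × (W × Fin 2)) : Matrix (Fin 2) (Fin 2) ℂ :=
  if G.Adj q.1 q.2 then
    if q.1.2 = q.2.2 then outer (ind q.1.2)
    else if q.1.1 = q.2.1 then (2:ℂ)⁻¹ • outer (ind (0:Fin 2) - ind 1)
    else if q.1.2 = 0 then (2:ℂ)⁻¹ • outer (ind (0:Fin 2) - ind 1)
    else (2:ℂ)⁻¹ • outer (ind (0:Fin 2) + ind 1)
  else outer (ind 0)

def flip (q : (W × Fin 2) × (W × Fin 2)) : (W × Fin 2) × (W × Fin 2) :=
  if q.1.2 = q.2.2 then q else ((q.1.1, 1 - q.1.2), (q.2.1, 1 - q.2.2))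

lemma fin2_sub_sub : ∀ a : Fin 2, 1 - (1 - a) = a := by decide
lemma fin2_sub_ne : ∀ a b : Fin 2, ¬a = b → ¬(1 - a = 1 - b) := by decide
lemma fin2_cases : ∀ a b : Fin 2, ¬a = b → (a = 0 ∧ b = 1) ∨ (a = 1 ∧ b = 0) := by decide

lemma flip_involutive : Function.Involutive (flip (W := W)) := by
  intro q
  by_cases h : q.1.2 = q.2.2
  · simp [flip, h]
  · simp [flip, h, fin2_sub_ne _ _ h, fin2_sub_sub]

lemma flip_adj (G : SimpleGraph (W × Fin 2)) [DecidableRel G.Adj]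
    (hAdj : ∀ (w w' : W) (a b : Fin 2), a ≠ b →
      G.Adj (w, a) (w', b) → G.Adj (w, 1 - a) (w', 1 - b))
    (q : (W × Fin 2) × (W × Fin 2)) (h : G.Adj q.1 q.2) :
    G.Adj (flip q).1 (flip q).2 := by
  by_cases hab : q.1.2 = q.2.2
  · simpa [flip, hab] using h
  · simpa [flip, hab] using hAdj q.1.1 q.2.1 q.1.2 q.2.2 hab h

lemma flip_adj_iff (G : SimpleGraph (W × Fin 2)) [DecidableRel G.Adj]
    (hAdj : ∀ (w w' : W) (a b : Fin 2), a ≠ b →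
      G.Adj (w, a) (w', b) → G.Adj (w, 1 - a) (w', 1 - b))
    (q : (W × Fin 2) × (W × Fin 2)) :
    G.Adj (flip q).1 (flip q).2 ↔ G.Adj q.1 q.2 := by
  constructor
  · intro h
    have := flip_adj G hAdj (flip q) h
    rwa [flip_involutive q] at this
  · exact flip_adj G hAdj q

lemma quarter {γ : Type*} [Fintype γ] [DecidableEq γ] (f g : γ → ℂ) :
    (2:ℂ)⁻¹ • ((2:ℂ)⁻¹ • outer (f + g)) + (2:ℂ)⁻¹ • ((2:ℂ)⁻¹ • outer (f - g))
      = (2:ℂ)⁻¹ • outer f + (2:ℂ)⁻¹ • outer g := by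
  rw [← smul_add, ← smul_add, outer_polar, smul_smul, smul_smul, smul_add]
  norm_num

lemma key (G : SimpleGraph (W × Fin 2)) [DecidableRel G.Adj]
    (hAdj : ∀ (w w' : W) (a b : Fin 2), a ≠ b →
      G.Adj (w, a) (w', b) → G.Adj (w, 1 - a) (w', 1 - b))
    (w₀ : W) (q : (W × Fin 2) × (W × Fin 2)) :
    (if G.Adj q.1 q.2 then sig G w₀ q ⊗ₖ tau G q else 0)
      + (if G.Adj (flip q).1 (flip q).2 then sig G w₀ (flip q) ⊗ₖ tau G (flip q) else 0)
    = (if G.Adj q.1 q.2 then (2:ℂ)⁻¹ • outer (ind q.1 - ind q.2) else 0)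
      + (if G.Adj (flip q).1 (flip q).2 then (2:ℂ)⁻¹ • outer (ind (flip q).1 - ind (flip q).2) else 0) := by
  by_cases h : G.Adj q.1 q.2
  case neg =>
    have h' : ¬ G.Adj (flip q).1 (flip q).2 := fun hc => h ((flip_adj_iff G hAdj q).mp hc)
    simp [h, h']
  case pos =>
  have h' : G.Adj (flip q).1 (flip q).2 := flip_adj G hAdj q h
  rw [if_pos h, if_pos h', if_pos h, if_pos h']
  obtain ⟨⟨w,a⟩,⟨w',b⟩⟩ := q
  by_cases hab : a = b
  · have hf : flip ((w,a),(w',b)) = ((w,a),(w',b)) := by simp [flip, hab]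
    rw [hf] at h' ⊢
    subst hab
    have hs : sig G w₀ ((w,a),(w',a)) = (2:ℂ)⁻¹ • outer (ind w - ind w') := by
      simp [sig, h]
    have ht : tau G ((w,a),(w',a)) = outer (ind a) := by simp [tau, h]
    rw [hs, ht, smul_kronecker, outer_kron, vecA]
  · have hf : flip ((w,a),(w',b)) = ((w,1-a),(w',1-b)) := by simp [flip, hab]
    have hab' : ¬(1 - a = 1 - b) := fin2_sub_ne a b hab
    rw [hf] at h' ⊢
    by_cases hw : w = w'
    · subst hw
      have hs : sig G w₀ ((w,a),(w,b)) = outer (ind w) := by simp [sig, h, hab]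
      have ht : tau G ((w,a),(w,b)) = (2:ℂ)⁻¹ • outer (ind (0:Fin 2) - ind 1) := by
        simp [tau, h, hab]
      have hs' : sig G w₀ ((w,1-a),(w,1-b)) = outer (ind w) := by simp [sig, h', hab']
      have ht' : tau G ((w,1-a),(w,1-b)) = (2:ℂ)⁻¹ • outer (ind (0:Fin 2) - ind 1) := by
        simp [tau, h', hab']
      rw [hs, ht, hs', ht']
      simp only [kronecker_smul, outer_kron, vecB]
      rcases fin2_cases a b hab with ⟨rfl, rfl⟩ | ⟨rfl, rfl⟩
      · rw [show ((1:Fin 2) - 0) = 1 from rfl, show ((1:Fin 2) - 1) = 0 from rfl,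
          show ind (w,(1:Fin 2)) - ind (w,0) = -(ind (w,(0:Fin 2)) - ind (w,1)) from (neg_sub _ _).symm,
          outer_neg]
      · rw [show ((1:Fin 2) - 0) = 1 from rfl, show ((1:Fin 2) - 1) = 0 from rfl,
          show ind (w,(1:Fin 2)) - ind (w,0) = -(ind (w,(0:Fin 2)) - ind (w,1)) from (neg_sub _ _).symm,
          outer_neg, add_comm]
    · rcases fin2_cases a b hab with ⟨rfl, rfl⟩ | ⟨rfl, rfl⟩ <;>
        rw [show ((1:Fin 2) - 0) = 1 from rfl, show ((1:Fin 2) - 1) = 0 from rfl] at h' ⊢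
      · -- a = 0, b = 1
        have hs : sig G w₀ ((w,(0:Fin 2)),(w',1)) = (2:ℂ)⁻¹ • outer (ind w + ind w') := by
          simp [sig, h, hw, show ¬((0:Fin 2) = 1) by decide]
        have ht : tau G ((w,(0:Fin 2)),(w',1)) = (2:ℂ)⁻¹ • outer (ind (0:Fin 2) - ind 1) := by
          simp [tau, h, hw, show ¬((0:Fin 2) = 1) by decide]
        have hs' : sig G w₀ ((w,(1:Fin 2)),(w',0)) = (2:ℂ)⁻¹ • outer (ind w - ind w') := by
          simp [sig, h', hw, show ¬((1:Fin 2) = 0) by decide]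
        have ht' : tau G ((w,(1:Fin 2)),(w',0)) = (2:ℂ)⁻¹ • outer (ind (0:Fin 2) + ind 1) := by
          simp [tau, h', hw, show ¬((1:Fin 2) = 0) by decide]
        rw [hs, ht, hs', ht']
        simp only [smul_kronecker, kronecker_smul, outer_kron]
        rw [vecC, vecD, quarter,
          show ind (w,(1:Fin 2)) - ind (w',0) = -(ind (w',(0:Fin 2)) - ind (w,1)) from (neg_sub _ _).symm,
          outer_neg]
      · -- a = 1, b = 0
        have hs : sig G w₀ ((w,(1:Fin 2)),(w',0)) = (2:ℂ)⁻¹ • outer (ind w - ind w') := by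
          simp [sig, h, hw, show ¬((1:Fin 2) = 0) by decide]
        have ht : tau G ((w,(1:Fin 2)),(w',0)) = (2:ℂ)⁻¹ • outer (ind (0:Fin 2) + ind 1) := by
          simp [tau, h, hw, show ¬((1:Fin 2) = 0) by decide]
        have hs' : sig G w₀ ((w,(0:Fin 2)),(w',1)) = (2:ℂ)⁻¹ • outer (ind w + ind w') := by
          simp [sig, h', hw, show ¬((0:Fin 2) = 1) by decide]
        have ht' : tau G ((w,(0:Fin 2)),(w',1)) = (2:ℂ)⁻¹ • outer (ind (0:Fin 2) - ind 1) := by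
          simp [tau, h', hw, show ¬((0:Fin 2) = 1) by decide]
        rw [hs, ht, hs', ht']
        simp only [smul_kronecker, kronecker_smul, outer_kron]
        rw [vecC, vecD, add_comm ((2:ℂ)⁻¹ • ((2:ℂ)⁻¹ • _)), quarter,
          show ind (w,(1:Fin 2)) - ind (w',0) = -(ind (w',(0:Fin 2)) - ind (w,1)) from (neg_sub _ _).symm,
          outer_neg, add_comm]

lemma sig_isDM (G : SimpleGraph (W × Fin 2)) [DecidableRel G.Adj] (w₀ : W)
    (q : (W × Fin 2) × (W × Fin 2)) :
    (sig G w₀ q).PosSemidef ∧ (sig G w₀ q).trace = 1 := by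
  obtain ⟨⟨w,a⟩,⟨w',b⟩⟩ := q
  by_cases h : G.Adj (w,a) (w',b)
  · by_cases hab : a = b
    · subst hab
      have hww : w ≠ w' := by
        rintro rfl
        exact G.ne_of_adj h rfl
      have hs : sig G w₀ ((w,a),(w',a)) = (2:ℂ)⁻¹ • outer (ind w - ind w') := by
        simp [sig, h]
      rw [hs]
      exact ⟨half_posSemidef (outer_posSemidef _), by
        rw [Matrix.trace_smul, trace_outer_sub hww, smul_eq_mul]; norm_num⟩
    · by_cases hw : w = w'
      · subst hw
        have hs : sig G w₀ ((w,a),(w,b)) = outer (ind w) := by simp [sig, h, hab]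
        rw [hs]
        exact ⟨outer_posSemidef _, trace_outer_ind _⟩
      · by_cases ha : a = 0
        · subst ha
          have hs : sig G w₀ ((w,(0:Fin 2)),(w',b)) = (2:ℂ)⁻¹ • outer (ind w + ind w') := by
            simp [sig, h, hab, hw]
          rw [hs]
          exact ⟨half_posSemidef (outer_posSemidef _), by
            rw [Matrix.trace_smul, trace_outer_add hw, smul_eq_mul]; norm_num⟩
        · have hs : sig G w₀ ((w,a),(w',b)) = (2:ℂ)⁻¹ • outer (ind w - ind w') := by
            simp [sig, h, hab, hw, ha]
          rw [hs]
          exact ⟨half_posSemidef (outer_posSemidef _), by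
            rw [Matrix.trace_smul, trace_outer_sub hw, smul_eq_mul]; norm_num⟩
  · have hs : sig G w₀ ((w,a),(w',b)) = outer (ind w₀) := by simp [sig, h]
    rw [hs]
    exact ⟨outer_posSemidef _, trace_outer_ind _⟩

lemma tau_isDM (G : SimpleGraph (W × Fin 2)) [DecidableRel G.Adj]
    (q : (W × Fin 2) × (W × Fin 2)) :
    (tau G q).PosSemidef ∧ (tau G q).trace = 1 := by
  obtain ⟨⟨w,a⟩,⟨w',b⟩⟩ := q
  have h01 : (0 : Fin 2) ≠ 1 := by decide
  by_cases h : G.Adj (w,a) (w',b)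
  · by_cases hab : a = b
    · subst hab
      have hs : tau G ((w,a),(w',a)) = outer (ind a) := by simp [tau, h]
      rw [hs]
      exact ⟨outer_posSemidef _, trace_outer_ind _⟩
    · by_cases hw : w = w'
      · subst hw
        have hs : tau G ((w,a),(w,b)) = (2:ℂ)⁻¹ • outer (ind (0:Fin 2) - ind 1) := by
          simp [tau, h, hab]
        rw [hs]
        exact ⟨half_posSemidef (outer_posSemidef _), by
          rw [Matrix.trace_smul, trace_outer_sub h01, smul_eq_mul]; norm_num⟩
      · by_cases ha : a = 0
        · subst ha
          have hs : tau G ((w,(0:Fin 2)),(w',b)) = (2:ℂ)⁻¹ • outer (ind (0:Fin 2) - ind 1) := by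
            simp [tau, h, hab, hw]
          rw [hs]
          exact ⟨half_posSemidef (outer_posSemidef _), by
            rw [Matrix.trace_smul, trace_outer_sub h01, smul_eq_mul]; norm_num⟩
        · have hs : tau G ((w,a),(w',b)) = (2:ℂ)⁻¹ • outer (ind (0:Fin 2) + ind 1) := by
            simp [tau, h, hab, hw, ha]
          rw [hs]
          exact ⟨half_posSemidef (outer_posSemidef _), by
            rw [Matrix.trace_smul, trace_outer_add h01, smul_eq_mul]; norm_num⟩
  · have hs : tau G ((w,a),(w',b)) = outer (ind (0:Fin 2)) := by simp [tau, h]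
    rw [hs]
    exact ⟨outer_posSemidef _, trace_outer_ind _⟩

lemma sum_F_eq (G : SimpleGraph (W × Fin 2)) [DecidableRel G.Adj]
    (hAdj : ∀ (w w' : W) (a b : Fin 2), a ≠ b →
      G.Adj (w, a) (w', b) → G.Adj (w, 1 - a) (w', 1 - b))
    (w₀ : W) :
    ∑ q : (W × Fin 2) × (W × Fin 2), (if G.Adj q.1 q.2 then sig G w₀ q ⊗ₖ tau G q else 0)
      = ∑ q : (W × Fin 2) × (W × Fin 2),
          (if G.Adj q.1 q.2 then (2:ℂ)⁻¹ • outer (ind q.1 - ind q.2) else 0) := by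
  set F : (W × Fin 2) × (W × Fin 2) → Matrix (W × Fin 2) (W × Fin 2) ℂ :=
    fun q => (if G.Adj q.1 q.2 then sig G w₀ q ⊗ₖ tau G q else 0) with hF
  set Gm : (W × Fin 2) × (W × Fin 2) → Matrix (W × Fin 2) (W × Fin 2) ℂ :=
    fun q => (if G.Adj q.1 q.2 then (2:ℂ)⁻¹ • outer (ind q.1 - ind q.2) else 0) with hGm
  have hre : ∀ (g : (W × Fin 2) × (W × Fin 2) → Matrix (W × Fin 2) (W × Fin 2) ℂ),
      ∑ q, g (flip q) = ∑ q, g q :=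
    fun g => Equiv.sum_comp (Function.Involutive.toPerm _ flip_involutive) g
  have main : (∑ q, F (flip q)) + (∑ q, F q) = (∑ q, Gm (flip q)) + (∑ q, Gm q) := by
    rw [← Finset.sum_add_distrib, ← Finset.sum_add_distrib]
    refine Finset.sum_congr rfl fun q _ => ?_
    rw [add_comm (F (flip q)), add_comm (Gm (flip q))]
    exact key G hAdj w₀ q
  rw [hre F, hre Gm] at main
  calc ∑ q, F q = (2:ℂ)⁻¹ • ((2:ℂ) • ∑ q, F q) := by rw [smul_smul]; norm_num
    _ = (2:ℂ)⁻¹ • ((2:ℂ) • ∑ q, Gm q) := by rw [two_smul, two_smul, main]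
    _ = ∑ q, Gm q := by rw [smul_smul]; norm_num

lemma card_adj {V : Type*} [Fintype V] [DecidableEq V] (G : SimpleGraph V)
    [DecidableRel G.Adj] :
    (Finset.univ.filter fun q : V × V => G.Adj q.1 q.2).card = 2 * G.edgeFinset.card := by
  rw [SimpleGraph.two_mul_card_edgeFinset]

end PF

theorem parity_flip_closed_separable
    {W : Type*} [Fintype W] [DecidableEq W] [Nonempty W]
    (G : SimpleGraph (W × Fin 2)) [DecidableRel G.Adj]
    (hE : G.edgeFinset.Nonempty)
    (hAdj : ∀ (w w' : W) (a b : Fin 2), a ≠ b →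
      G.Adj (w, a) (w', b) → G.Adj (w, 1 - a) (w', 1 - b)) :
    Separable (lapState G) := by
  classical
  have w₀ : W := Classical.arbitrary W
  have hm0 : 0 < G.edgeFinset.card := Finset.card_pos.mpr hE
  set m : ℕ := G.edgeFinset.card with hmdef
  set e := (Fintype.equivFin ((W × Fin 2) × (W × Fin 2))).symm with hedef
  refine ⟨Fintype.card ((W × Fin 2) × (W × Fin 2)),
    fun k => if G.Adj (e k).1 (e k).2 then (2 * m : ℝ)⁻¹ else 0,
    fun k => PF.sig G w₀ (e k),
    fun k => PF.tau G (e k),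
    fun k => ?_, ?_, fun k => PF.sig_isDM G w₀ (e k), fun k => PF.tau_isDM G (e k), ?_⟩
  · dsimp only
    split_ifs with h
    · positivity
    · exact le_refl 0
  · rw [Fintype.sum_equiv e _
      (fun q => if G.Adj q.1 q.2 then (2 * m : ℝ)⁻¹ else 0) (fun k => rfl)]
    rw [← Finset.sum_filter, Finset.sum_const, PF.card_adj, nsmul_eq_mul]
    have hmr : (0:ℝ) < m := by exact_mod_cast hm0
    have hne : ((2:ℝ) * m) ≠ 0 := ne_of_gt (by nlinarith)
    have hcast : ((2 * m : ℕ) : ℝ) = 2 * (m:ℝ) := by push_cast; ring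
    rw [hcast, mul_inv_cancel₀ hne]
  · rw [Fintype.sum_equiv e _
      (fun q => (((if G.Adj q.1 q.2 then (2 * m : ℝ)⁻¹ else 0 : ℝ)) : ℂ) •
        (PF.sig G w₀ q ⊗ₖ PF.tau G q)) (fun k => rfl)]
    have step : ∀ q : (W × Fin 2) × (W × Fin 2),
        (((if G.Adj q.1 q.2 then (2 * m : ℝ)⁻¹ else 0 : ℝ)) : ℂ) •
          (PF.sig G w₀ q ⊗ₖ PF.tau G q)
        = ((2 * m : ℂ))⁻¹ • (if G.Adj q.1 q.2 then PF.sig G w₀ q ⊗ₖ PF.tau G q else 0) := by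
      intro q
      by_cases h : G.Adj q.1 q.2
      · rw [if_pos h, if_pos h]
        congr 1
        push_cast
        ring
      · simp [h]
    rw [Finset.sum_congr rfl fun q _ => step q, ← Finset.smul_sum]
    rw [PF.sum_F_eq G hAdj w₀, ← PF.lap_eq_sum]
    rfl
end
end
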